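/- Let p be an odd prime, and let r, t be non-negative integers with r ≥ t and r - t even such that t_0 ≠ p - 1, r_0 ≡ t_0 (mod 2), and r_0 < t_0 (where n_i denotes the i-th base-p digit of n). If (N, σ, δ, I) is an admissible quadruple for the pair (r, t) with N ≥ 1, then 0 ∈ I, σ_0 = p - 1 - t_0, and δ_0 = (r_0 + t_0)/2 + 1. -/
import Mathlib


/-- The `i`-th digit of the base-`p` expansion of `n`. -/
def digit (p n i : ℕ) : ℕ := n / p ^ i % p

/-- `σ_I = ∑_{i ∈ I} p^i σ_i`. -/
def digitSum (p σ : ℕ) (I : Finset ℕ) : ℕ := ∑ i ∈ I, p ^ i * digit p σ i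

/-- An admissible triple `(N, σ, δ)`. -/
def AdmissibleTriple (p N σ δ : ℕ) : Prop :=
  σ < p ^ (N + 1) - p ^ N ∧ δ < p ^ (N + 1) - p ^ N ∧
  (∀ i < N, digit p σ i + digit p δ i ≤ p - 1) ∧
  digit p σ N + digit p δ N < p - 1

/-- An admissible quadruple `(N, σ, δ, I)`. -/
def AdmissibleQuadruple (p N σ δ : ℕ) (I : Finset ℕ) : Prop :=
  AdmissibleTriple p N σ δ ∧ ∀ i ∈ I, digit p σ i ≠ 0 ∧ i ≠ N

/-- An admissible quadruple for the pair `(r, t)`. -/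
def AdmissibleQuadrupleFor (p r t N σ δ : ℕ) (I : Finset ℕ) : Prop :=
  AdmissibleQuadruple p N σ δ I ∧
  t + 2 * digitSum p σ I = p ^ N - 1 + σ ∧
  r ≡ p ^ N - 1 + σ + 2 * δ [MOD 2 * p ^ (N + 1)]

lemma digit_zero (p n : ℕ) : digit p n 0 = n % p := by simp [digit]

lemma digitSum_modEq (p σ : ℕ) (I : Finset ℕ) :
    digitSum p σ I ≡ (if 0 ∈ I then σ % p else 0) [MOD p] := by
  unfold digitSum
  by_cases h0 : 0 ∈ I
  · rw [if_pos h0, ← Finset.add_sum_erase _ _ h0]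
    have hdvd : p ∣ ∑ x ∈ I.erase 0, p ^ x * digit p σ x :=
      Finset.dvd_sum fun i hi =>
        dvd_mul_of_dvd_left (dvd_pow_self p (Finset.ne_of_mem_erase hi)) _
    calc p ^ 0 * digit p σ 0 + ∑ x ∈ I.erase 0, p ^ x * digit p σ x
        ≡ p ^ 0 * digit p σ 0 + 0 [MOD p] :=
          Nat.ModEq.add_left _ ((Nat.modEq_zero_iff_dvd).2 hdvd)
      _ = σ % p := by simp [digit]
  · rw [if_neg h0]
    refine (Nat.modEq_zero_iff_dvd).2 (Finset.dvd_sum fun i hi => ?_)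
    exact dvd_mul_of_dvd_left (dvd_pow_self p (fun h => h0 (h ▸ hi))) _

theorem stmt_14 (p : ℕ) (hp : p.Prime) (hodd : Odd p) (r t : ℕ) (hrt : t ≤ r)
    (hev : Even (r - t)) (ht0 : digit p t 0 ≠ p - 1)
    (hpar : digit p r 0 % 2 = digit p t 0 % 2) (hlt : digit p r 0 < digit p t 0)
    (N σ δ : ℕ) (I : Finset ℕ)
    (h : AdmissibleQuadrupleFor p r t N σ δ I) (hN : 1 ≤ N) :
    0 ∈ I ∧ digit p σ 0 = p - 1 - digit p t 0 ∧
      2 * digit p δ 0 = digit p r 0 + digit p t 0 + 2 := by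
  obtain ⟨⟨⟨hσ, hδ, hsum, -⟩, hI⟩, heq, hr⟩ := h
  obtain ⟨m, hm⟩ := hodd
  have hp2 : 2 ≤ p := hp.two_le
  have hm1 : 1 ≤ m := by omega
  -- abbreviations
  set T := t % p with hT
  set R := r % p with hR
  set a := σ % p with ha
  set b := δ % p with hb
  have hTp : T < p := Nat.mod_lt _ (by omega)
  have hRp : R < p := Nat.mod_lt _ (by omega)
  have hap : a < p := Nat.mod_lt _ (by omega)
  have hbp : b < p := Nat.mod_lt _ (by omega)
  rw [digit_zero] at ht0 hpar hlt
  rw [digit_zero] at hpar hlt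
  have hab : a + b ≤ p - 1 := by
    have := hsum 0 (by omega)
    rwa [digit_zero, digit_zero] at this
  -- p^N - 1 ≡ p - 1 [MOD p]
  have hpN : p ≤ p ^ N := Nat.le_self_pow (by omega) p
  have hmod1 : p ^ N - 1 ≡ p - 1 [MOD p] := by
    have hdvd : p ∣ p ^ N - p := Nat.dvd_sub (dvd_pow_self p (by omega)) dvd_rfl
    calc p ^ N - 1 = (p - 1) + (p ^ N - p) := by omega
      _ ≡ (p - 1) + 0 [MOD p] := Nat.ModEq.add_left _ ((Nat.modEq_zero_iff_dvd).2 hdvd)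
      _ = p - 1 := by omega
  -- first congruence
  have hS := digitSum_modEq p σ I
  have h1 : T + 2 * (if 0 ∈ I then a else 0) ≡ (p - 1) + a [MOD p] := by
    calc T + 2 * (if 0 ∈ I then a else 0)
        ≡ t + 2 * digitSum p σ I [MOD p] :=
          (Nat.mod_modEq t p).add (hS.symm.mul_left 2)
      _ = p ^ N - 1 + σ := heq
      _ ≡ (p - 1) + a [MOD p] := hmod1.add (Nat.mod_modEq σ p).symm
  -- second congruence
  have h2 : R ≡ (p - 1) + a + 2 * b [MOD p] := by
    have hdvd : p ∣ 2 * p ^ (N + 1) := Dvd.dvd.mul_left (dvd_pow_self p (by omega)) 2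
    calc R ≡ r [MOD p] := Nat.mod_modEq r p
      _ ≡ p ^ N - 1 + σ + 2 * δ [MOD p] := hr.of_dvd hdvd
      _ ≡ (p - 1) + a + 2 * b [MOD p] :=
        (hmod1.add (Nat.mod_modEq σ p).symm).add ((Nat.mod_modEq δ p).symm.mul_left 2)
  have h0I : 0 ∈ I := by
    by_contra h0
    rw [if_neg h0] at h1
    obtain ⟨k, hk⟩ := h1.dvd
    have hk3 : k < 3 := by
      have : (p:ℤ) * k < (p:ℤ) * 3 := by rw [← hk]; push_cast; omega
      exact lt_of_mul_lt_mul_left this (by positivity)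
    have hk0 : -3 < k := by
      have : (p:ℤ) * (-3) < (p:ℤ) * k := by rw [← hk]; push_cast; omega
      exact lt_of_mul_lt_mul_left this (by positivity)
    interval_cases k
    · omega
    · omega
    · -- k = 0 : p - 1 + a = T, forces T = p-1, a = 0, contradiction with ht0 or a
      omega
    · -- k = 1 : a = T + 1; use h2
      have ha1 : a = T + 1 := by omega
      obtain ⟨j, hj⟩ := h2.dvd
      have hj4 : j < 4 := by
        have : (p:ℤ) * j < (p:ℤ) * 4 := by rw [← hj]; push_cast; omega
        exact lt_of_mul_lt_mul_left this (by positivity)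
      have hj0 : -1 < j := by
        have : (p:ℤ) * (-1) < (p:ℤ) * j := by rw [← hj]; push_cast; omega
        exact lt_of_mul_lt_mul_left this (by positivity)
      interval_cases j <;> omega
    · omega
  refine ⟨h0I, ?_⟩
  rw [if_pos h0I] at h1
  obtain ⟨k, hk⟩ := h1.dvd
  have hk2 : k < 2 := by
    have : (p:ℤ) * k < (p:ℤ) * 2 := by rw [← hk]; push_cast; omega
    exact lt_of_mul_lt_mul_left this (by positivity)
  have hk0 : -2 < k := by
    have : (p:ℤ) * (-2) < (p:ℤ) * k := by rw [← hk]; push_cast; omega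
    exact lt_of_mul_lt_mul_left this (by positivity)
  have haT : a = p - 1 - T ∧ T < p - 1 := by
    have haI : digit p σ 0 ≠ 0 := (hI 0 h0I).1
    rw [digit_zero] at haI
    interval_cases k <;> omega
  rw [digit_zero, digit_zero, digit_zero, digit_zero]
  refine ⟨haT.1, ?_⟩
  obtain ⟨j, hj⟩ := h2.dvd
  have hj4 : j < 4 := by
    have : (p:ℤ) * j < (p:ℤ) * 4 := by rw [← hj]; push_cast; omega
    exact lt_of_mul_lt_mul_left this (by positivity)
  have hj0 : -1 < j := by
    have : (p:ℤ) * (-1) < (p:ℤ) * j := by rw [← hj]; push_cast; omega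
    exact lt_of_mul_lt_mul_left this (by positivity)
  have haT1 := haT.1
  have haT2 := haT.2
  interval_cases j <;> omega
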